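/- (Lipschitz continuity of the continuation value.) Fix a horizon H ≥ 2, a damage rate κ > 0, a reward exponent β ∈ (0,1], and effort levels 0 < e_L < e_H ≤ 1. Let V(d) = 2^{−(H−1)} ∑_{e ∈ {e_L,e_H}^{H−1}} G_e(d) be the uniform-policy continuation value and ē_β = (e_L^β + e_H^β)/2. Then for all d₁, d₂ ≥ 0 with dᵢ + κ(H−1)e_H ≤ 1 for i = 1, 2, we have |V(d₁) − V(d₂)| ≤ 2(H−1)·ē_β·|d₁ − d₂|. -/

import Mathlib

/-- Continuation return along effort sequence `e` from initial damage `d`. -/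
noncomputable def contReturn (H : ℕ) (κ β : ℝ) (e : ℕ → ℝ) (d : ℝ) : ℝ :=
  ∑ t ∈ Finset.range (H - 1),
    (e t) ^ β * (1 - (d + κ * ∑ s ∈ Finset.range t, e s)) ^ 2

/-- Uniform-policy continuation value: the average of `contReturn` over all
`2^(H-1)` effort sequences with values in `{eL, eH}`, encoded by
`c : Fin (H-1) → Bool` (`true ↦ eH`, `false ↦ eL`). -/
noncomputable def contValue (H : ℕ) (κ β eL eH : ℝ) (d : ℝ) : ℝ :=
  (2 : ℝ) ^ (-((H : ℤ) - 1)) *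
    ∑ c : Fin (H - 1) → Bool,
      contReturn H κ β
        (fun t => if ht : t < H - 1 then (if c ⟨t, ht⟩ then eH else eL) else 0) d

lemma sum_bool_apply {n : ℕ} (i : Fin n) (g : Bool → ℝ) :
    ∑ c : Fin n → Bool, g (c i) = 2 ^ n * ((g false + g true) / 2) := by
  have hbij : Function.Bijective (fun c : Fin n → Bool => Function.update c i (!c i)) := by
    constructor
    · intro a b hab
      funext j
      by_cases hj : j = i
      · subst hj
        have := congrFun hab j
        simpa using this
      · have := congrFun hab j
        simpa [Function.update, hj] using this
    · intro b
      exact ⟨Function.update b i (!b i), by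
        funext j; by_cases hj : j = i <;> simp [Function.update, hj]⟩
  have h2 : ∑ c : Fin n → Bool, g (!(c i)) = ∑ c : Fin n → Bool, g (c i) :=
    Fintype.sum_bijective _ hbij _ _ (fun c => by simp)
  have h3 : ∀ c : Fin n → Bool, g (c i) + g (!(c i)) = g false + g true := by
    intro c; cases h : c i <;> simp [h] <;> ring
  have hcard : (Fintype.card (Fin n → Bool) : ℝ) = 2 ^ n := by simp
  have key : 2 * ∑ c : Fin n → Bool, g (c i) = 2 ^ n * (g false + g true) := by
    calc 2 * ∑ c : Fin n → Bool, g (c i)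
        = (∑ c : Fin n → Bool, g (c i)) + ∑ c : Fin n → Bool, g (!(c i)) := by rw [h2]; ring
      _ = ∑ c : Fin n → Bool, (g (c i) + g (!(c i))) := by rw [Finset.sum_add_distrib]
      _ = ∑ c : Fin n → Bool, (g false + g true) := Finset.sum_congr rfl (fun c _ => h3 c)
      _ = 2 ^ n * (g false + g true) := by
          rw [Finset.sum_const, nsmul_eq_mul]
          simp
  linarith

lemma contReturn_lip (H : ℕ) (κ β eH : ℝ) (e : ℕ → ℝ)
    (hκ : 0 < κ) (he0 : ∀ s, 0 ≤ e s) (heH : ∀ s, e s ≤ eH)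
    (d₁ d₂ : ℝ) (hd₁ : 0 ≤ d₁) (hd₂ : 0 ≤ d₂)
    (hb₁ : d₁ + κ * ((H : ℝ) - 1) * eH ≤ 1)
    (hb₂ : d₂ + κ * ((H : ℝ) - 1) * eH ≤ 1) :
    |contReturn H κ β e d₁ - contReturn H κ β e d₂| ≤
      ∑ t ∈ Finset.range (H - 1), (e t) ^ β * (2 * |d₁ - d₂|) := by
  unfold contReturn
  rw [← Finset.sum_sub_distrib]
  refine (Finset.abs_sum_le_sum_abs _ _).trans (Finset.sum_le_sum ?_)
  intro t ht
  rw [Finset.mem_range] at ht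
  have heH0 : 0 ≤ eH := le_trans (he0 0) (heH 0)
  set S := κ * ∑ s ∈ Finset.range t, e s with hS
  have hS0 : 0 ≤ S := mul_nonneg hκ.le (Finset.sum_nonneg fun s _ => he0 s)
  have htH : (t : ℝ) ≤ (H : ℝ) - 1 := by
    have : t + 2 ≤ H := by omega
    have := Nat.cast_le (α := ℝ).2 this
    push_cast at this
    linarith
  have hSle : S ≤ κ * ((H : ℝ) - 1) * eH := by
    have hsum : ∑ s ∈ Finset.range t, e s ≤ (t : ℝ) * eH := by
      calc ∑ s ∈ Finset.range t, e s ≤ ∑ s ∈ Finset.range t, eH :=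
            Finset.sum_le_sum fun s _ => heH s
        _ = (t : ℝ) * eH := by rw [Finset.sum_const, Finset.card_range, nsmul_eq_mul]
    calc S ≤ κ * ((t : ℝ) * eH) := by
          exact mul_le_mul_of_nonneg_left hsum hκ.le
      _ ≤ κ * ((H : ℝ) - 1) * eH := by
          rw [mul_assoc]
          exact mul_le_mul_of_nonneg_left (mul_le_mul_of_nonneg_right htH heH0) hκ.le
  have h1 : d₁ + S ≤ 1 := by linarith
  have h2 : d₂ + S ≤ 1 := by linarith
  have hrpow : 0 ≤ e t ^ β := Real.rpow_nonneg (he0 t) β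
  rw [← mul_sub, abs_mul, abs_of_nonneg hrpow]
  refine mul_le_mul_of_nonneg_left ?_ hrpow
  have heq : (1 - (d₁ + S)) ^ 2 - (1 - (d₂ + S)) ^ 2
      = (d₂ - d₁) * (2 - d₁ - d₂ - 2 * S) := by ring
  rw [heq, abs_mul]
  have habs2 : |2 - d₁ - d₂ - 2 * S| ≤ 2 := by
    rw [abs_le]; constructor <;> linarith
  calc |d₂ - d₁| * |2 - d₁ - d₂ - 2 * S| ≤ |d₂ - d₁| * 2 :=
        mul_le_mul_of_nonneg_left habs2 (abs_nonneg _)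
    _ = 2 * |d₁ - d₂| := by rw [abs_sub_comm]; ring
theorem stmt_10 (H : ℕ) (hH : 2 ≤ H) (κ β eL eH : ℝ)
    (hκ : 0 < κ) (hβ0 : 0 < β) (hβ1 : β ≤ 1)
    (heL : 0 < eL) (hLH : eL < eH) (heH : eH ≤ 1)
    (d₁ d₂ : ℝ) (hd₁ : 0 ≤ d₁) (hd₂ : 0 ≤ d₂)
    (hb₁ : d₁ + κ * ((H : ℝ) - 1) * eH ≤ 1)
    (hb₂ : d₂ + κ * ((H : ℝ) - 1) * eH ≤ 1) :
    |contValue H κ β eL eH d₁ - contValue H κ β eL eH d₂| ≤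
      2 * ((H : ℝ) - 1) * ((eL ^ β + eH ^ β) / 2) * |d₁ - d₂| := by
  have hHn : ((H : ℝ) - 1) = ((H - 1 : ℕ) : ℝ) := by
    rw [Nat.cast_sub (by omega)]; simp
  set n := H - 1 with hndef
  set K := 2 * |d₁ - d₂| with hK
  set ebar := (eL ^ β + eH ^ β) / 2 with hebar
  -- per-sequence bound
  have key : ∀ c : Fin n → Bool,
      |contReturn H κ β
          (fun t => if ht : t < n then (if c ⟨t, ht⟩ then eH else eL) else 0) d₁ -
        contReturn H κ β
          (fun t => if ht : t < n then (if c ⟨t, ht⟩ then eH else eL) else 0) d₂| ≤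
      ∑ t ∈ Finset.range n,
        ((fun t => if ht : t < n then (if c ⟨t, ht⟩ then eH else eL) else 0) t) ^ β * K := by
    intro c
    refine contReturn_lip H κ β eH _ hκ ?_ ?_ d₁ d₂ hd₁ hd₂ hb₁ hb₂
    · intro s
      by_cases hs : s < n
      · simp only [dif_pos hs]
        have heH0 : (0:ℝ) < eH := heL.trans hLH
        split <;> linarith
      · simp [hs]
    · intro s
      by_cases hs : s < n
      · simp only [dif_pos hs]
        split <;> linarith
      · simp only [dif_neg hs]
        linarith
  -- sum over sequences
  have hsum : |∑ c : Fin n → Bool,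
      (contReturn H κ β
          (fun t => if ht : t < n then (if c ⟨t, ht⟩ then eH else eL) else 0) d₁ -
        contReturn H κ β
          (fun t => if ht : t < n then (if c ⟨t, ht⟩ then eH else eL) else 0) d₂)| ≤
      (n : ℝ) * (2 ^ n * (ebar * K)) := by
    refine (Finset.abs_sum_le_sum_abs _ _).trans ?_
    refine le_trans (Finset.sum_le_sum fun c _ => key c) ?_
    rw [Finset.sum_comm]
    have hper : ∀ t ∈ Finset.range n,
        (∑ c : Fin n → Bool,
          ((fun t => if ht : t < n then (if c ⟨t, ht⟩ then eH else eL) else 0) t) ^ β * K)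
        = 2 ^ n * (ebar * K) := by
      intro t ht
      rw [Finset.mem_range] at ht
      have := sum_bool_apply (n := n) ⟨t, ht⟩
        (fun b => (if b then eH else eL) ^ β * K)
      simp only [dif_pos ht]
      rw [this]
      norm_num [hebar]
      ring
    rw [Finset.sum_congr rfl hper, Finset.sum_const, Finset.card_range, nsmul_eq_mul]
  -- put it together
  unfold contValue
  rw [← mul_sub, ← Finset.sum_sub_distrib, abs_mul]
  have hz2 : ((H : ℤ) - 1) = (n : ℤ) := by omega
  have hzn : |(2 : ℝ) ^ (-((H : ℤ) - 1))| = ((2 : ℝ) ^ n)⁻¹ := by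
    rw [hz2, abs_of_pos (zpow_pos two_pos _), zpow_neg, zpow_natCast]
  rw [hzn]
  refine le_trans (mul_le_mul_of_nonneg_left hsum (by positivity)) (le_of_eq ?_)
  rw [hHn, hK]
  have h2n : (2 : ℝ) ^ n ≠ 0 := by positivity
  field_simp
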